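/- The generalized Mayer–Vietoris sequence of cochain complexes 0 → C•(A) → ⊕_{α₀} C•(A_{α₀}) → ⊕_{α₀<α₁} C•(A_{α₀·α₁}) → ⋯ → ⊕_{α₀<⋯<α_p} C•(A_{α₀⋯α_p}) → ⋯ is exact at every term, where the maps are the generalized restriction homomorphisms with alternating signs. -/

import Mathlib

namespace Stmt7

/- Here `S` stands for the set of `q`-simplices (for some fixed degree `q`) of
the finite simplicial complex `A`, and `A i ⊆ S` for the set of `q`-simplices of
the subcomplex `A_i`, so that `C^q(A_{α₀⋯α_p})` is the space of ℚ-valued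
functions on `⋂ i, A (α i)`, and `C^q(A)` that on `⋃ i, A i`. -/

variable {S : Type} {n : ℕ}

/-- Strictly increasing (p+1)-tuples α₀ < ⋯ < α_p of indices. -/
abbrev Tup (n p : ℕ) := {f : Fin (p + 1) → Fin n // StrictMono f}

/-- An element of ⊕_{α₀<⋯<α_p} C^q(A_{α₀⋯α_p}). -/
abbrev MVElt (A : Fin n → Set S) (p : ℕ) := ∀ α : Tup n p, (↥(⋂ i, A (α.1 i)) → ℚ)

/-- The generalized restriction homomorphism with alternating signs,
(δω)_{α₀,…,α_{p+1}} = Σ_j (−1)^j ω_{α₀,…,α̂_j,…,α_{p+1}} restricted. -/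
noncomputable def MVdelta (A : Fin n → Set S) (p : ℕ) (ω : MVElt A p) :
    MVElt A (p + 1) := fun α s =>
  ∑ j : Fin (p + 2), (-1 : ℚ) ^ (j : ℕ) *
    ω ⟨α.1 ∘ j.succAbove, α.2.comp (Fin.strictMono_succAbove j)⟩
      ⟨s.1, Set.mem_iInter.2 fun i => Set.mem_iInter.1 s.2 (j.succAbove i)⟩

/-- The restriction map r : C^q(A) → ⊕_{α₀} C^q(A_{α₀}). -/
def r (A : Fin n → Set S) (φ : (↥(⋃ i, A i)) → ℚ) : MVElt A 0 :=
  fun α s => φ ⟨s.1, Set.mem_iUnion.2 ⟨α.1 0, Set.mem_iInter.1 s.2 0⟩⟩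

/-! ### Auxiliary lemmas -/

lemma strictMono_cons {p : ℕ} {m : Fin n} {f : Fin (p + 1) → Fin n}
    (hm : m < f 0) (hf : StrictMono f) : StrictMono (Fin.cons m f : Fin (p + 2) → Fin n) := by
  rw [Fin.strictMono_iff_lt_succ]
  intro i
  induction i using Fin.cases with
  | zero => simpa using hm
  | succ j =>
    rw [← Fin.succ_castSucc]
    simp only [Fin.cons_succ]
    exact hf (Fin.castSucc_lt_succ : j.castSucc < j.succ)

lemma succAbove_comm {p : ℕ} {i j : Fin (p + 2)} (H : i ≤ j) (k : Fin (p + 1)) :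
    (j.succ).succAbove (i.succAbove k) = (i.castSucc).succAbove (j.succAbove k) := by
  rcases i with ⟨i, _⟩
  rcases j with ⟨j, _⟩
  rcases k with ⟨k, _⟩
  simp only [Fin.succAbove, Fin.lt_def, Fin.le_def] at *
  split_ifs <;> simp_all [Fin.ext_iff, Fin.castSucc, Fin.succ, Fin.castAdd, Fin.castLE] <;> omega

lemma cons_comp_succAbove {p : ℕ} (m : Fin n) (f : Fin (p + 1) → Fin n) (k : Fin (p + 1))
    (i : Fin (p + 1)) :
    (Fin.cons m f : Fin (p + 2) → Fin n) ((k.succ : Fin (p + 2)).succAbove i) =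
      (Fin.cons m (f ∘ k.succAbove) : Fin (p + 1) → Fin n) i := by
  induction i using Fin.cases with
  | zero => simp
  | succ j => simp [Fin.succ_succAbove_succ]

noncomputable def mIdx (A : Fin n → Set S) (x : S) (h : ∃ i, x ∈ A i) : Fin n :=
  letI := Classical.decPred fun i : Fin n => x ∈ A i
  (Finset.univ.filter fun i => x ∈ A i).min'
    (by obtain ⟨i, hi⟩ := h; exact ⟨i, Finset.mem_filter.2 ⟨Finset.mem_univ i, hi⟩⟩)

lemma mIdx_mem (A : Fin n → Set S) (x : S) (h : ∃ i, x ∈ A i) : x ∈ A (mIdx A x h) := by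
  letI := Classical.decPred fun i : Fin n => x ∈ A i
  have := Finset.min'_mem (Finset.univ.filter fun i : Fin n => x ∈ A i)
    (by obtain ⟨i, hi⟩ := h; exact ⟨i, Finset.mem_filter.2 ⟨Finset.mem_univ i, hi⟩⟩)
  exact (Finset.mem_filter.1 this).2

lemma mIdx_le (A : Fin n → Set S) (x : S) (h : ∃ i, x ∈ A i) (i : Fin n) (hi : x ∈ A i) :
    mIdx A x h ≤ i := by
  letI := Classical.decPred fun i : Fin n => x ∈ A i
  exact Finset.min'_le _ _ (Finset.mem_filter.2 ⟨Finset.mem_univ i, hi⟩)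

/-- Congruence for evaluation of an `MVElt`. -/
lemma elt_congr {A : Fin n → Set S} {p : ℕ} (ω : MVElt A p) {β β' : Tup n p}
    (hβ : β.1 = β'.1) {t : ↥(⋂ i, A (β.1 i))} {t' : ↥(⋂ i, A (β'.1 i))}
    (ht : t.1 = t'.1) : ω β t = ω β' t' := by
  rcases β with ⟨f, hf⟩
  rcases β' with ⟨f', hf'⟩
  dsimp at hβ
  subst hβ
  exact congrArg _ (Subtype.ext ht)

lemma cons_mem {A : Fin n → Set S} {x : S} {p : ℕ} {m : Fin n} {f : Fin (p + 1) → Fin n}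
    (hm : x ∈ A m) (hf : ∀ i, x ∈ A (f i)) :
    x ∈ ⋂ i, A ((Fin.cons m f : Fin (p + 2) → Fin n) i) :=
  Set.mem_iInter.2 fun i => by
    induction i using Fin.cases with
    | zero => simpa using hm
    | succ j => simpa using hf j

/-- The contracting homotopy. -/
noncomputable def hmap (A : Fin n → Set S) (p : ℕ) (ω : MVElt A (p + 1)) : MVElt A p :=
  fun α s =>
    if hm : mIdx A s.1 ⟨α.1 0, Set.mem_iInter.1 s.2 0⟩ < α.1 0 then
      ω ⟨Fin.cons (mIdx A s.1 ⟨α.1 0, Set.mem_iInter.1 s.2 0⟩) α.1, strictMono_cons hm α.2⟩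
        ⟨s.1, cons_mem (mIdx_mem A s.1 _) fun i => Set.mem_iInter.1 s.2 i⟩
    else 0


lemma hmap_key (A : Fin n → Set S) (p : ℕ) (ω : MVElt A (p + 1))
    (hω : MVdelta A (p + 1) ω = fun _ _ => 0) :
    MVdelta A p (hmap A p ω) = ω := by
  funext α s
  have hx : ∃ i, s.1 ∈ A i := ⟨α.1 0, Set.mem_iInter.1 s.2 0⟩
  have hmem : ∀ i, s.1 ∈ A (α.1 i) := fun i => Set.mem_iInter.1 s.2 i
  set m := mIdx A s.1 hx with hm_def
  have hle : m ≤ α.1 0 := mIdx_le A s.1 hx _ (hmem 0)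
  show (∑ j : Fin (p + 2), (-1 : ℚ) ^ (j : ℕ) *
    hmap A p ω ⟨α.1 ∘ j.succAbove, α.2.comp (Fin.strictMono_succAbove j)⟩
      ⟨s.1, Set.mem_iInter.2 fun i => Set.mem_iInter.1 s.2 (j.succAbove i)⟩) = ω α s
  rcases lt_or_eq_of_le hle with hlt | heq
  · -- m < α 0 : every term has the dif-condition true
    have hmlt : ∀ j : Fin (p + 2), m < (α.1 ∘ j.succAbove) 0 :=
      fun j => lt_of_lt_of_le hlt (α.2.monotone (Fin.zero_le _))
    set G : Fin (p + 2) → ℚ := fun j =>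
      ω ⟨Fin.cons m (α.1 ∘ j.succAbove),
          strictMono_cons (hmlt j) (α.2.comp (Fin.strictMono_succAbove j))⟩
        ⟨s.1, cons_mem (mIdx_mem A s.1 hx) fun i => hmem _⟩ with hG
    have hstep : ∀ j : Fin (p + 2),
        hmap A p ω ⟨α.1 ∘ j.succAbove, α.2.comp (Fin.strictMono_succAbove j)⟩
          ⟨s.1, Set.mem_iInter.2 fun i => Set.mem_iInter.1 s.2 (j.succAbove i)⟩ = G j := by
      intro j
      rw [hmap]
      rw [dif_pos (show mIdx A s.1 _ < (α.1 ∘ j.succAbove) 0 from hmlt j)]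
    -- use the hypothesis at the tuple `cons m α`
    have h0 : (∑ j : Fin (p + 3), (-1 : ℚ) ^ (j : ℕ) *
        ω ⟨(Fin.cons m α.1 : Fin (p + 3) → Fin n) ∘ j.succAbove,
            (strictMono_cons hlt α.2).comp (Fin.strictMono_succAbove j)⟩
          ⟨s.1, Set.mem_iInter.2 fun i =>
            Set.mem_iInter.1 (cons_mem (mIdx_mem A s.1 hx) hmem) (j.succAbove i)⟩) = 0 :=
      congrFun (congrFun hω ⟨Fin.cons m α.1, strictMono_cons hlt α.2⟩)
        ⟨s.1, cons_mem (mIdx_mem A s.1 hx) hmem⟩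
    rw [Fin.sum_univ_succ] at h0
    have e0 : ω ⟨(Fin.cons m α.1 : Fin (p + 3) → Fin n) ∘ (0 : Fin (p + 3)).succAbove,
            (strictMono_cons hlt α.2).comp (Fin.strictMono_succAbove 0)⟩
          ⟨s.1, Set.mem_iInter.2 fun i =>
            Set.mem_iInter.1 (cons_mem (mIdx_mem A s.1 hx) hmem)
              ((0 : Fin (p + 3)).succAbove i)⟩ = ω α s :=
      elt_congr ω (funext fun i => by simp) rfl
    have h2 : (∑ k : Fin (p + 2), (-1 : ℚ) ^ (((k.succ : Fin (p + 3))) : ℕ) *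
        ω ⟨(Fin.cons m α.1 : Fin (p + 3) → Fin n) ∘ (k.succ : Fin (p + 3)).succAbove,
            (strictMono_cons hlt α.2).comp (Fin.strictMono_succAbove k.succ)⟩
          ⟨s.1, Set.mem_iInter.2 fun i =>
            Set.mem_iInter.1 (cons_mem (mIdx_mem A s.1 hx) hmem)
              ((k.succ : Fin (p + 3)).succAbove i)⟩)
        = ∑ k : Fin (p + 2), -((-1 : ℚ) ^ (k : ℕ) * G k) := by
      refine Finset.sum_congr rfl fun k _ => ?_
      have hre := elt_congr ω
        (β := ⟨(Fin.cons m α.1 : Fin (p + 3) → Fin n) ∘ (k.succ : Fin (p + 3)).succAbove,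
          (strictMono_cons hlt α.2).comp (Fin.strictMono_succAbove k.succ)⟩)
        (β' := ⟨Fin.cons m (α.1 ∘ k.succAbove),
          strictMono_cons (hmlt k) (α.2.comp (Fin.strictMono_succAbove k))⟩)
        (funext (cons_comp_succAbove m α.1 k))
        (t := ⟨s.1, Set.mem_iInter.2 fun i =>
          Set.mem_iInter.1 (cons_mem (mIdx_mem A s.1 hx) hmem)
            ((k.succ : Fin (p + 3)).succAbove i)⟩)
        (t' := ⟨s.1, cons_mem (mIdx_mem A s.1 hx) fun i => hmem (k.succAbove i)⟩)
        rfl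
      rw [hre, Fin.val_succ, pow_succ, hG]
      ring
    rw [e0, h2] at h0
    simp only [Finset.sum_neg_distrib] at h0
    simp only [hstep]
    rw [Fin.val_zero, pow_zero, one_mul] at h0
    linarith
  · -- m = α 0
    rw [Fin.sum_univ_succ]
    have e0 : hmap A p ω ⟨α.1 ∘ (0 : Fin (p + 2)).succAbove,
          α.2.comp (Fin.strictMono_succAbove 0)⟩
        ⟨s.1, Set.mem_iInter.2 fun i => Set.mem_iInter.1 s.2 ((0 : Fin (p+2)).succAbove i)⟩
        = ω α s := by
      rw [hmap]
      rw [dif_pos (show mIdx A s.1 _ < (α.1 ∘ (0 : Fin (p + 2)).succAbove) 0 from by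
        show m < α.1 ((0 : Fin (p + 2)).succAbove 0)
        rw [heq]
        exact α.2 (by simp [Fin.lt_def]))]
      refine elt_congr ω (funext fun i => ?_) rfl
      induction i using Fin.cases with
      | zero => simpa using heq
      | succ j => simp
    have esucc : ∀ k : Fin (p + 1),
        ((-1 : ℚ) ^ (((k.succ : Fin (p + 2))) : ℕ) *
          hmap A p ω ⟨α.1 ∘ (k.succ : Fin (p + 2)).succAbove,
            α.2.comp (Fin.strictMono_succAbove k.succ)⟩
          ⟨s.1, Set.mem_iInter.2 fun i =>
            Set.mem_iInter.1 s.2 ((k.succ : Fin (p + 2)).succAbove i)⟩) = 0 := by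
      intro k
      rw [hmap]
      rw [dif_neg (show ¬ mIdx A s.1 _ < (α.1 ∘ (k.succ : Fin (p + 2)).succAbove) 0 from by
        show ¬ m < α.1 ((k.succ : Fin (p + 2)).succAbove 0)
        rw [Fin.succ_succAbove_zero, ← heq]
        exact lt_irrefl m)]
      rw [mul_zero]
    rw [e0]
    simp only [esucc]
    simp

/-- The involution used in the proof of `δ ∘ δ = 0`. -/
def gInv (p : ℕ) : Fin (p + 3) × Fin (p + 2) → Fin (p + 3) × Fin (p + 2) := fun x =>
  if h : (x.2.castSucc : Fin (p + 3)) < x.1 then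
    (x.2.castSucc, x.1.pred (Fin.pos_iff_ne_zero.1 (lt_of_le_of_lt (Fin.zero_le _) h)))
  else
    (x.2.succ, x.1.castPred
      (ne_of_lt (lt_of_le_of_lt (not_lt.1 h) (Fin.castSucc_lt_last x.2))))

lemma gInv_invol (p : ℕ) (x : Fin (p + 3) × Fin (p + 2)) : gInv p (gInv p x) = x := by
  rcases x with ⟨a, b⟩
  unfold gInv
  by_cases h : (b.castSucc : Fin (p + 3)) < a
  · rw [dif_pos h]
    rw [dif_neg (by
      simp only [not_lt, Fin.le_def, Fin.coe_castSucc, Fin.coe_pred]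
      have := h
      rw [Fin.lt_def, Fin.coe_castSucc] at this
      omega)]
    simp [Fin.ext_iff]
  · rw [dif_neg h]
    rw [dif_pos (by
      simp only [Fin.lt_def, Fin.coe_castSucc, Fin.coe_castPred, Fin.val_succ]
      rw [not_lt, Fin.le_def, Fin.coe_castSucc] at h
      omega)]
    simp [Fin.ext_iff]

lemma delta_delta (A : Fin n → Set S) (p : ℕ) (η : MVElt A p) :
    MVdelta A (p + 1) (MVdelta A p η) = fun _ _ => 0 := by
  funext α s
  show (∑ j : Fin (p + 3), (-1 : ℚ) ^ (j : ℕ) *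
    MVdelta A p η ⟨α.1 ∘ j.succAbove, α.2.comp (Fin.strictMono_succAbove j)⟩
      ⟨s.1, Set.mem_iInter.2 fun i => Set.mem_iInter.1 s.2 (j.succAbove i)⟩) = 0
  have hstep : ∀ j : Fin (p + 3),
      MVdelta A p η ⟨α.1 ∘ j.succAbove, α.2.comp (Fin.strictMono_succAbove j)⟩
        ⟨s.1, Set.mem_iInter.2 fun i => Set.mem_iInter.1 s.2 (j.succAbove i)⟩
      = ∑ k : Fin (p + 2), (-1 : ℚ) ^ (k : ℕ) *
          η ⟨fun i => α.1 (j.succAbove (k.succAbove i)),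
              (α.2.comp (Fin.strictMono_succAbove j)).comp (Fin.strictMono_succAbove k)⟩
            ⟨s.1, Set.mem_iInter.2 fun i =>
              Set.mem_iInter.1 s.2 (j.succAbove (k.succAbove i))⟩ := fun j => rfl
  simp only [hstep, Finset.mul_sum]
  rw [← Finset.sum_product']
  set F : Fin (p + 3) × Fin (p + 2) → ℚ := fun x =>
    (-1 : ℚ) ^ (x.1 : ℕ) * ((-1 : ℚ) ^ (x.2 : ℕ) *
      η ⟨fun i => α.1 (x.1.succAbove (x.2.succAbove i)),
          (α.2.comp (Fin.strictMono_succAbove x.1)).comp (Fin.strictMono_succAbove x.2)⟩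
        ⟨s.1, Set.mem_iInter.2 fun i =>
          Set.mem_iInter.1 s.2 (x.1.succAbove (x.2.succAbove i))⟩) with hF
  refine Finset.sum_ninvolution (gInv p) ?_ ?_ (fun x => Finset.mem_univ _) (gInv_invol p)
  · -- cancellation
    rintro ⟨a, b⟩
    dsimp only
    unfold gInv
    by_cases h : (b.castSucc : Fin (p + 3)) < a
    · rw [dif_pos h]
      have hne : a ≠ 0 := Fin.pos_iff_ne_zero.1 (lt_of_le_of_lt (Fin.zero_le _) h)
      have hle : b ≤ a.pred hne := by
        rw [Fin.le_def, Fin.coe_pred]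
        rw [Fin.lt_def, Fin.coe_castSucc] at h
        omega
      have harg : ∀ k, a.succAbove (b.succAbove k)
          = (b.castSucc).succAbove ((a.pred hne).succAbove k) := by
        intro k
        have := succAbove_comm hle k
        rwa [Fin.succ_pred] at this
      have hre := elt_congr η
        (β := ⟨fun i => α.1 (a.succAbove (b.succAbove i)),
          (α.2.comp (Fin.strictMono_succAbove a)).comp (Fin.strictMono_succAbove b)⟩)
        (β' := ⟨fun i => α.1 ((b.castSucc).succAbove ((a.pred hne).succAbove i)),
          (α.2.comp (Fin.strictMono_succAbove b.castSucc)).comp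
            (Fin.strictMono_succAbove (a.pred hne))⟩)
        (funext fun i => congrArg α.1 (harg i))
        (t := ⟨s.1, Set.mem_iInter.2 fun i =>
          Set.mem_iInter.1 s.2 (a.succAbove (b.succAbove i))⟩)
        (t' := ⟨s.1, Set.mem_iInter.2 fun i =>
          Set.mem_iInter.1 s.2 ((b.castSucc).succAbove ((a.pred hne).succAbove i))⟩)
        rfl
      rw [hre]
      have hval : (a : ℕ) = (a.pred hne : ℕ) + 1 := by
        have h' : (b : ℕ) < (a : ℕ) := h
        rw [Fin.coe_pred]
        omega
      rw [show ((b.castSucc : Fin (p + 3)) : ℕ) = (b : ℕ) from rfl, hval, pow_succ]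
      ring
    · rw [dif_neg h]
      have hnl : a ≠ Fin.last (p + 2) :=
        ne_of_lt (lt_of_le_of_lt (not_lt.1 h) (Fin.castSucc_lt_last b))
      have hle : a.castPred hnl ≤ b := by
        rw [Fin.le_def, Fin.coe_castPred]
        rw [not_lt, Fin.le_def, Fin.coe_castSucc] at h
        omega
      have harg : ∀ k, a.succAbove (b.succAbove k)
          = (b.succ).succAbove ((a.castPred hnl).succAbove k) := by
        intro k
        have := succAbove_comm hle k
        rw [Fin.castSucc_castPred] at this
        exact this.symm
      have hre := elt_congr η
        (β := ⟨fun i => α.1 (a.succAbove (b.succAbove i)),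
          (α.2.comp (Fin.strictMono_succAbove a)).comp (Fin.strictMono_succAbove b)⟩)
        (β' := ⟨fun i => α.1 ((b.succ).succAbove ((a.castPred hnl).succAbove i)),
          (α.2.comp (Fin.strictMono_succAbove b.succ)).comp
            (Fin.strictMono_succAbove (a.castPred hnl))⟩)
        (funext fun i => congrArg α.1 (harg i))
        (t := ⟨s.1, Set.mem_iInter.2 fun i =>
          Set.mem_iInter.1 s.2 (a.succAbove (b.succAbove i))⟩)
        (t' := ⟨s.1, Set.mem_iInter.2 fun i =>
          Set.mem_iInter.1 s.2 ((b.succ).succAbove ((a.castPred hnl).succAbove i))⟩)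
        rfl
      rw [hre]
      rw [show ((a.castPred hnl : Fin (p + 2)) : ℕ) = (a : ℕ) from rfl,
        Fin.val_succ, pow_succ]
      ring
  · -- no fixed point needed: g x ≠ x
    rintro ⟨a, b⟩ hne0
    unfold gInv
    by_cases h : (b.castSucc : Fin (p + 3)) < a
    · rw [dif_pos h]
      intro hcon
      have := congrArg Prod.fst hcon
      simp only at this
      exact absurd this (ne_of_lt h)
    · rw [dif_neg h]
      intro hcon
      have := congrArg Prod.fst hcon
      simp only at this
      rw [not_lt] at h
      have : a < (b.succ : Fin (p + 3)) := lt_of_le_of_lt h (Fin.castSucc_lt_succ : b.castSucc < b.succ)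
      exact absurd (congrArg Prod.fst hcon) (ne_of_gt this)

lemma fin1_strictMono (f : Fin (0 + 1) → Fin n) : StrictMono f := fun a b h => by
  rw [Fin.lt_def] at h
  have ha := a.isLt
  have hb := b.isLt
  omega

lemma fin1_eq_zero (i : Fin (0 + 1)) : i = 0 := by
  have := i.isLt
  exact Fin.ext (by omega)

lemma delta_r (A : Fin n → Set S) (φ : (↥(⋃ i, A i)) → ℚ) :
    MVdelta A 0 (r A φ) = fun _ _ => 0 := by
  funext α s
  rw [MVdelta, Fin.sum_univ_two]
  norm_num [r]

lemma key0 (A : Fin n → Set S) (ω : MVElt A 0) (hδ : MVdelta A 0 ω = fun _ _ => 0) :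
    ∃ φ, r A φ = ω := by
  refine ⟨fun x => ω ⟨fun _ => mIdx A x.1 (Set.mem_iUnion.1 x.2), fin1_strictMono _⟩
    ⟨x.1, Set.mem_iInter.2 fun _ => mIdx_mem A x.1 (Set.mem_iUnion.1 x.2)⟩, ?_⟩
  funext α s
  have hx : ∃ i, s.1 ∈ A i := ⟨α.1 0, Set.mem_iInter.1 s.2 0⟩
  have hmem : ∀ i, s.1 ∈ A (α.1 i) := fun i => Set.mem_iInter.1 s.2 i
  set m := mIdx A s.1 hx with hm_def
  have hle : m ≤ α.1 0 := mIdx_le A s.1 hx _ (hmem 0)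
  have hr : r A (fun x => ω ⟨fun _ => mIdx A x.1 (Set.mem_iUnion.1 x.2),
        fin1_strictMono _⟩ ⟨x.1, Set.mem_iInter.2 fun _ => mIdx_mem A x.1 (Set.mem_iUnion.1 x.2)⟩) α s
      = ω ⟨fun _ : Fin 1 => m, fin1_strictMono _⟩
        ⟨s.1, Set.mem_iInter.2 fun _ => mIdx_mem A s.1 hx⟩ := rfl
  rw [hr]
  rcases lt_or_eq_of_le hle with hlt | heq
  · have h0 : (∑ j : Fin 2, (-1 : ℚ) ^ (j : ℕ) *
        ω ⟨(Fin.cons m α.1 : Fin 2 → Fin n) ∘ j.succAbove,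
            (strictMono_cons hlt α.2).comp (Fin.strictMono_succAbove j)⟩
          ⟨s.1, Set.mem_iInter.2 fun i =>
            Set.mem_iInter.1 (cons_mem (mIdx_mem A s.1 hx) hmem) (j.succAbove i)⟩) = 0 :=
      congrFun (congrFun hδ ⟨Fin.cons m α.1, strictMono_cons hlt α.2⟩)
        ⟨s.1, cons_mem (mIdx_mem A s.1 hx) hmem⟩
    rw [Fin.sum_univ_two] at h0
    have e0 : ω ⟨(Fin.cons m α.1 : Fin 2 → Fin n) ∘ (0 : Fin 2).succAbove,
            (strictMono_cons hlt α.2).comp (Fin.strictMono_succAbove 0)⟩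
          ⟨s.1, Set.mem_iInter.2 fun i =>
            Set.mem_iInter.1 (cons_mem (mIdx_mem A s.1 hx) hmem)
              ((0 : Fin 2).succAbove i)⟩ = ω α s :=
      elt_congr ω (funext fun i => by simp) rfl
    have e1 : ω ⟨(Fin.cons m α.1 : Fin 2 → Fin n) ∘ (1 : Fin 2).succAbove,
            (strictMono_cons hlt α.2).comp (Fin.strictMono_succAbove 1)⟩
          ⟨s.1, Set.mem_iInter.2 fun i =>
            Set.mem_iInter.1 (cons_mem (mIdx_mem A s.1 hx) hmem)
              ((1 : Fin 2).succAbove i)⟩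
        = ω ⟨fun _ : Fin 1 => m, fin1_strictMono _⟩
          ⟨s.1, Set.mem_iInter.2 fun _ => mIdx_mem A s.1 hx⟩ :=
      elt_congr ω (funext fun i => by rw [fin1_eq_zero i]; rfl) rfl
    rw [e0, e1] at h0
    norm_num at h0
    linarith
  · exact elt_congr ω (funext fun i => by rw [fin1_eq_zero i]; exact heq) rfl

/-- the generalized Mayer–Vietoris sequence
0 → C^q(A) → ⊕_{α₀} C^q(A_{α₀}) → ⊕_{α₀<α₁} C^q(A_{α₀·α₁}) → ⋯ is exact at
every term: `r` is injective, ker δ⁰ = im r, and ker δ^{p+1} = im δ^p. -/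
theorem stmt_7 (A : Fin n → Set S) :
    Function.Injective (r A) ∧
      (∀ ω : MVElt A 0, MVdelta A 0 ω = (fun _ _ => 0) ↔ ∃ φ, r A φ = ω) ∧
      (∀ p : ℕ, ∀ ω : MVElt A (p + 1),
        MVdelta A (p + 1) ω = (fun _ _ => 0) ↔ ∃ η : MVElt A p, MVdelta A p η = ω) := by
  refine ⟨?_, fun ω => ⟨key0 A ω, ?_⟩, fun p ω =>
    ⟨fun h => ⟨hmap A p ω, hmap_key A p ω h⟩, ?_⟩⟩
  · intro φ φ' h
    funext x
    obtain ⟨i, hi⟩ := Set.mem_iUnion.1 x.2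
    exact congrFun (congrFun h ⟨fun _ => i, fin1_strictMono _⟩)
      ⟨x.1, Set.mem_iInter.2 fun _ => hi⟩
  · rintro ⟨φ, rfl⟩
    exact delta_r A φ
  · rintro ⟨η, rfl⟩
    exact delta_delta A p η


end Stmt7
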